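/- Every finite 2-connected outerplanar graph has a Hamilton cycle. Conversely, every finite outerplanar graph with a Hamilton cycle is 2-connected. -/

import Mathlib

open SimpleGraph

universe u w

/-- Outerplanar: the vertices can be placed (injectively) on a line — equivalently on
a circle, with all vertices on the outer face boundary — so that no two edges cross. -/
def IsOuterplanar {V : Type u} (G : SimpleGraph V) : Prop :=
  ∃ f : V → ℕ, Function.Injective f ∧
    ∀ a b c d : V, G.Adj a b → G.Adj c d →
      ¬(f a < f c ∧ f c < f b ∧ f b < f d)

/-- 2-connected: at least three vertices, and deleting any single vertex leaves a
connected graph. -/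
def TwoConnected {V : Type u} (G : SimpleGraph V) : Prop :=
  3 ≤ Nat.card V ∧ ∀ v : V, (G.induce {u | u ≠ v}).Connected

section Aux

variable {V : Type u}

/-- A set closed under adjacency absorbs walks. -/
lemma aux_walk_closed (G : SimpleGraph V) (M : Set V)
    (hM : ∀ x ∈ M, ∀ y, G.Adj x y → y ∈ M) :
    ∀ {x y : V} (_ : G.Walk x y), x ∈ M → y ∈ M := by
  intro x y w
  induction w with
  | nil => exact id
  | cons h p ih => intro hx; exact ih (hM _ hx _ h)

/-- A walk whose support lies in `s` yields reachability in the induced graph. -/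
lemma aux_reach_induce (G : SimpleGraph V) (s : Set V) :
    ∀ {x y : V} (w : G.Walk x y) (hw : ∀ z ∈ w.support, z ∈ s),
      (G.induce s).Reachable ⟨x, hw x w.start_mem_support⟩ ⟨y, hw y w.end_mem_support⟩ := by
  intro x y w
  induction w with
  | nil => intro hw; exact Reachable.refl _
  | @cons a b c h p ih =>
      intro hw
      have hb : ∀ z ∈ p.support, z ∈ s := fun z hz => hw z (by simp [hz])
      have h1 : (G.induce s).Adj ⟨a, hw a (Walk.start_mem_support _)⟩ ⟨b, hb b p.start_mem_support⟩ := h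
      exact h1.reachable.trans (by
        have := ih hb
        exact this)

/-- Reachability in an induced subgraph gives reachability in the ambient graph. -/
lemma aux_reach_of_induce (G : SimpleGraph V) (s : Set V) {x y : ↥s}
    (h : (G.induce s).Reachable x y) : G.Reachable x.val y.val := by
  obtain ⟨w⟩ := h
  induction w with
  | nil => exact Reachable.refl _
  | @cons a b c h p ih =>
      have h1 : G.Adj a.val b.val := h
      exact h1.reachable.trans ih

/-- Along a walk from a vertex satisfying `P` to one not satisfying it there is a
crossing edge. -/
lemma aux_cross_edge (G : SimpleGraph V) (P : V → Prop) :
    ∀ {x y : V} (_ : G.Walk x y), P x → ¬ P y → ∃ a b, G.Adj a b ∧ P a ∧ ¬ P b := by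
  intro x y w
  induction w with
  | nil => intro hx hy; exact absurd hx hy
  | @cons a b c h p ih =>
      intro hx hy
      by_cases hb : P b
      · exact ih hb hy
      · exact ⟨a, b, h, hx, hb⟩

/-- If a set `M` is closed under adjacency avoiding `z`, contains `u` but not `b`
(with `u, b ≠ z`), then deleting `z` disconnects `u` from `b`; contradiction with
2-connectivity. -/
lemma aux_no_split (G : SimpleGraph V)
    (hconn : ∀ v : V, (G.induce {u | u ≠ v}).Connected)
    (z u b : V) (M : Set V) (hu : u ∈ M) (hb : b ∉ M)
    (huz : u ≠ z) (hbz : b ≠ z)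
    (hcl : ∀ x ∈ M, ∀ y, G.Adj x y → y ≠ z → y ∈ M) : False := by
  have hreach : (G.induce {u | u ≠ z}).Reachable ⟨u, huz⟩ ⟨b, hbz⟩ :=
    (hconn z).preconnected _ _
  obtain ⟨w⟩ := hreach
  have hM : ∀ x ∈ (Subtype.val ⁻¹' M : Set {u | u ≠ z}), ∀ y,
      (G.induce {u | u ≠ z}).Adj x y → y ∈ (Subtype.val ⁻¹' M : Set {u | u ≠ z}) := by
    rintro ⟨x, hx⟩ hxM ⟨y, hy⟩ hxy
    exact hcl x hxM y hxy hy
  have : (⟨b, hbz⟩ : {u | u ≠ z}) ∈ (Subtype.val ⁻¹' M : Set {u | u ≠ z}) :=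
    aux_walk_closed _ _ hM w hu
  exact hb this

lemma aux_preconnected [Fintype V] [DecidableEq V] (G : SimpleGraph V)
    (hcard : 3 ≤ Fintype.card V)
    (hconn : ∀ v : V, (G.induce {u | u ≠ v}).Connected) : G.Preconnected := by
  intro x y
  by_cases hxy : x = y
  · subst hxy; exact Reachable.refl _
  obtain ⟨v, hv⟩ : ∃ v : V, v ≠ x ∧ v ≠ y := by
    by_contra hne
    push_neg at hne
    have hsub : (Finset.univ : Finset V) ⊆ {x, y} := by
      intro v _
      rcases Classical.em (v = x) with h | h
      · simp [h]
      · simp [hne v h]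
    have := Finset.card_le_card hsub
    have h2 : ({x, y} : Finset V).card ≤ 2 := Finset.card_insert_le _ _ |>.trans (by simp)
    simp [Finset.card_univ] at this
    omega
  have := (hconn v).preconnected ⟨x, hv.1.symm⟩ ⟨y, hv.2.symm⟩
  exact aux_reach_of_induce G _ this

/-- In a 2-connected non-crossing linear layout, consecutive vertices are adjacent. -/
lemma aux_adj_consec [Fintype V] [DecidableEq V] [LinearOrder V] (G : SimpleGraph V)
    (hnc : ∀ a b c d : V, G.Adj a b → G.Adj c d → ¬(a < c ∧ c < b ∧ b < d))
    (hpre : G.Preconnected)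
    (hconn : ∀ v : V, (G.induce {u | u ≠ v}).Connected)
    {u w : V} (huw : u < w) (hbetween : ∀ z : V, ¬(u < z ∧ z < w)) : G.Adj u w := by
  classical
  by_contra hadjuw
  have hcompl : ∀ x : V, ¬ x ≤ u → w ≤ x := by
    intro x hx
    have hux : u < x := lt_of_not_ge hx
    by_contra hwx
    exact hbetween x ⟨hux, lt_of_not_ge hwx⟩
  -- there is an edge across the cut
  obtain ⟨a, b, hab, hau, hbu⟩ :=
    aux_cross_edge G (fun x => x ≤ u) ((hpre u w).some) (le_refl u) (not_le.mpr huw)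
  have hwb : w ≤ b := hcompl b hbu
  -- innermost crossing edge
  set A : Finset V := Finset.univ.filter (fun a' => a' ≤ u ∧ ∃ b', G.Adj a' b' ∧ w ≤ b') with hA
  have hAne : A.Nonempty := ⟨a, by simp [hA]; exact ⟨hau, b, hab, hwb⟩⟩
  set a0 : V := A.max' hAne with ha0def
  have ha0mem : a0 ∈ A := A.max'_mem hAne
  have ha0u : a0 ≤ u := by simp [hA] at ha0mem; exact ha0mem.1
  have ha0b : ∃ b', G.Adj a0 b' ∧ w ≤ b' := by simp [hA] at ha0mem; exact ha0mem.2
  have hamax : ∀ c : V, c ≤ u → ∀ d : V, G.Adj c d → w ≤ d → c ≤ a0 := by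
    intro c hc d hcd hwd
    exact A.le_max' c (by simp [hA]; exact ⟨hc, d, hcd, hwd⟩)
  set B : Finset V := Finset.univ.filter (fun b' => G.Adj a0 b' ∧ w ≤ b') with hB
  have hBne : B.Nonempty := by
    obtain ⟨b', hb1, hb2⟩ := ha0b
    exact ⟨b', by simp [hB]; exact ⟨hb1, hb2⟩⟩
  set b0 : V := B.min' hBne with hb0def
  have hb0mem : b0 ∈ B := B.min'_mem hBne
  have hadjab : G.Adj a0 b0 := by simp [hB] at hb0mem; exact hb0mem.1
  have hwb0 : w ≤ b0 := by simp [hB] at hb0mem; exact hb0mem.2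
  have hbmin0 : ∀ d : V, G.Adj a0 d → w ≤ d → b0 ≤ d := by
    intro d h1 h2
    exact B.min'_le d (by simp [hB]; exact ⟨h1, h2⟩)
  have hbmin : ∀ c d : V, c ≤ u → G.Adj c d → w ≤ d → b0 ≤ d := by
    intro c d hc hcd hwd
    rcases eq_or_lt_of_le (hamax c hc d hcd hwd) with heq | hlt
    · exact hbmin0 d (heq ▸ hcd) hwd
    · by_contra hdb
      exact hnc c d a0 b0 hcd hadjab
        ⟨hlt, lt_of_le_of_lt ha0u (lt_of_lt_of_le huw hwd), lt_of_not_ge hdb⟩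
  rcases eq_or_lt_of_le ha0u with heq | hlt
  · -- a0 = u : then b0 ≠ w since ¬Adj u w, so w < b0
    have hb0w : w < b0 := by
      rcases eq_or_lt_of_le hwb0 with h | h
      · exact absurd (heq ▸ h ▸ hadjab) hadjuw
      · exact h
    refine aux_no_split G hconn b0 w u {x | w ≤ x ∧ x < b0} ⟨le_refl w, hb0w⟩ ?_ (ne_of_lt hb0w) (ne_of_lt (lt_trans huw hb0w)) ?_
    · rintro ⟨h1, _⟩; exact absurd (lt_of_lt_of_le huw h1) (lt_irrefl u)
    · rintro x ⟨hwx, hxb⟩ y hxy hyb0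
      by_cases hyu : y ≤ u
      · exact absurd (hbmin y x hyu hxy.symm hwx) (not_le.mpr hxb)
      · have hwy : w ≤ y := hcompl y hyu
        rcases lt_trichotomy y b0 with h | h | h
        · exact ⟨hwy, h⟩
        · exact absurd h hyb0
        · exact absurd ⟨lt_of_lt_of_le (heq ▸ huw) hwx, hxb, h⟩
            (fun hh => hnc a0 b0 x y hadjab hxy hh)
  · -- a0 < u
    refine aux_no_split G hconn a0 u b0 {x | a0 < x ∧ x ≤ u} ⟨hlt, le_refl u⟩ ?_ (ne_of_gt hlt) (ne_of_gt (lt_of_le_of_lt ha0u (lt_of_lt_of_le huw hwb0))) ?_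
    · rintro ⟨_, h2⟩; exact absurd (lt_of_lt_of_le huw hwb0) (not_lt.mpr h2)
    · rintro x ⟨hax, hxu⟩ y hxy hya0
      by_cases hyu : y ≤ u
      · rcases lt_trichotomy y a0 with h | h | h
        · exact absurd ⟨h, hax, lt_of_le_of_lt hxu (lt_of_lt_of_le huw hwb0)⟩
            (fun hh => hnc y x a0 b0 hxy.symm hadjab hh)
        · exact absurd h hya0
        · exact ⟨h, hyu⟩
      · have hwy : w ≤ y := hcompl y hyu
        exact absurd (hamax x hxu y hxy hwy) (not_le.mpr hax)

/-- In a 2-connected non-crossing linear layout, the extreme vertices are adjacent. -/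
lemma aux_adj_min_max [Fintype V] [DecidableEq V] [LinearOrder V] (G : SimpleGraph V)
    (hnc : ∀ a b c d : V, G.Adj a b → G.Adj c d → ¬(a < c ∧ c < b ∧ b < d))
    (hpre : G.Preconnected)
    (hconn : ∀ v : V, (G.induce {u | u ≠ v}).Connected)
    {m mx : V} (hm : ∀ x, m ≤ x) (hmx : ∀ x, x ≤ mx) (hne : m ≠ mx) : G.Adj m mx := by
  classical
  by_contra hadj
  obtain ⟨a, b, hab, ham, hbm⟩ :=
    aux_cross_edge G (fun x => x = m) ((hpre m mx).some) rfl hne.symm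
  have hmb : G.Adj m b := ham ▸ hab
  set Nb : Finset V := Finset.univ.filter (fun b' => G.Adj m b') with hNb
  have hNbne : Nb.Nonempty := ⟨b, by simp [hNb, hmb]⟩
  set b1 : V := Nb.max' hNbne with hb1def
  have hb1adj : G.Adj m b1 := by have := Nb.max'_mem hNbne; simpa [hNb] using this
  have hb1max : ∀ d : V, G.Adj m d → d ≤ b1 := fun d hd => Nb.le_max' d (by simp [hNb, hd])
  have hb1mx : b1 < mx := by
    rcases eq_or_lt_of_le (hmx b1) with h | h
    · exact absurd (h ▸ hb1adj) hadj
    · exact h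
  have hmb1 : m < b1 := lt_of_le_of_ne (hm b1) hb1adj.ne
  refine aux_no_split G hconn b1 mx m {x | b1 < x} hb1mx (not_lt.mpr (le_of_lt hmb1)) (ne_of_gt hb1mx) (ne_of_lt hmb1) ?_
  rintro x hx y hxy hyb1
  rcases lt_trichotomy y b1 with h | h | h
  · rcases eq_or_lt_of_le (hm y) with h2 | h2
    · exact absurd (hb1max x (h2 ▸ hxy.symm)) (not_le.mpr hx)
    · exact absurd ⟨h2, h, hx⟩ (fun hh => hnc m b1 y x hb1adj hxy.symm hh)
  · exact absurd h hyb1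
  · exact h

/-- Build a Hamiltonian cycle from a cyclic enumeration with consecutive adjacencies. -/
lemma aux_build_cycle [Fintype V] [DecidableEq V] (G : SimpleGraph V)
    (n : ℕ) (hn : 3 ≤ n) (g : ℕ → V)
    (hadj : ∀ k : ℕ, G.Adj (g (k + 1)) (g k))
    (hg0 : g n = g 0)
    (hinj : ∀ i < n, ∀ j < n, g i = g j → i = j)
    (hsurj : ∀ v : V, ∃ i < n, g i = v) :
    ∃ (a : V) (p : G.Walk a a), p.IsHamiltonianCycle := by
  classical
  have hchain : ∀ k : ℕ, ∃ w : G.Walk (g k) (g 0),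
      w.support = ((List.range (k + 1)).reverse).map g ∧
      w.edges = ((List.range k).reverse).map (fun i => s(g (i + 1), g i)) := by
    intro k
    induction k with
    | zero => exact ⟨Walk.nil, by simp [List.range_succ], by simp⟩
    | succ k ih =>
        obtain ⟨w, hw1, hw2⟩ := ih
        refine ⟨Walk.cons (hadj k) w, ?_, ?_⟩
        · simp [Walk.support_cons, hw1, List.range_succ]
        · simp [Walk.edges_cons, hw2, List.range_succ]
  obtain ⟨w, hw1, hw2⟩ := hchain (n - 1)
  have hstep : n - 1 + 1 = n := by omega
  rw [hstep] at hw1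
  have h0 : G.Adj (g 0) (g (n - 1)) := by
    have := hadj (n - 1)
    rw [hstep, hg0] at this
    exact this
  have hnodup : (((List.range n).reverse).map g).Nodup := by
    refine List.Nodup.map_on ?_ (List.nodup_reverse.mpr List.nodup_range)
    intro x hx y hy hxy
    rw [List.mem_reverse, List.mem_range] at hx hy
    exact hinj x hx y hy hxy
  have hwpath : w.IsPath := Walk.IsPath.mk' (by rw [hw1]; exact hnodup)
  have hedge : s(g 0, g (n - 1)) ∉ w.edges := by
    rw [hw2]
    intro hmem
    simp only [List.mem_map, List.mem_reverse, List.mem_range] at hmem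
    obtain ⟨i, hi, hieq⟩ := hmem
    rw [Sym2.eq_iff] at hieq
    rcases hieq with ⟨h1, h2⟩ | ⟨h1, h2⟩
    · have : i + 1 = 0 := hinj (i + 1) (by omega) 0 (by omega) h1
      omega
    · have e1 : i + 1 = n - 1 := hinj (i + 1) (by omega) (n - 1) (by omega) h1
      have e2 : i = 0 := hinj i (by omega) 0 (by omega) h2
      omega
  refine ⟨g 0, Walk.cons h0 w, ?_⟩
  rw [Walk.isHamiltonianCycle_iff_isCycle_and_support_count_tail_eq_one]
  constructor
  · exact (Walk.cons_isCycle_iff w h0).mpr ⟨hwpath, hedge⟩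
  · intro v
    rw [Walk.support_cons, List.tail_cons, hw1]
    obtain ⟨i, hi, hieq⟩ := hsurj v
    refine List.count_eq_one_of_mem hnodup ?_
    rw [List.mem_map]
    exact ⟨i, by rw [List.mem_reverse, List.mem_range]; exact hi, hieq⟩

/-- A graph with a Hamiltonian cycle is 2-connected. -/
lemma aux_ham_two [Fintype V] [DecidableEq V] (G : SimpleGraph V)
    {a : V} (p : G.Walk a a) (hp : p.IsHamiltonianCycle) : TwoConnected G := by
  classical
  constructor
  · rw [Nat.card_eq_fintype_card, ← hp.length_eq]
    exact hp.isCycle.three_le_length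
  · intro v
    have hv : v ∈ p.support := hp.mem_support v
    have hq' : (p.rotate v hv).IsHamiltonianCycle := by
      rw [Walk.isHamiltonianCycle_iff_isCycle_and_support_count_tail_eq_one]
      refine ⟨hp.isCycle.rotate hv, ?_⟩
      intro x
      have hperm : ((p.rotate v hv).support.tail).Perm (p.support.tail) :=
        (Walk.support_rotate p v hv).perm
      rw [hperm.count_eq, ← Walk.support_tail_of_not_nil p hp.isCycle.not_nil]
      exact hp.isHamiltonian_tail x
    set q : G.Walk v v := p.rotate v hv with hqdef
    clear_value q
    clear hqdef hv
    cases q with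
    | nil => exact absurd rfl hq'.isCycle.ne_nil
    | @cons _ w _ h r =>
        have hrpath : r.IsPath := ((Walk.cons_isCycle_iff r h).mp hq'.isCycle).1
        have hsupp : ∀ x : V, x ∈ r.support := by
          intro x
          have := hq'.mem_support x
          rw [Walk.support_cons] at this
          rcases List.mem_cons.mp this with hh | hh
          · rw [hh]; exact r.end_mem_support
          · exact hh
        have hwv : w ≠ v := h.ne'
        -- every x ≠ v reaches w in the induced graph
        have hreach : ∀ (x : V) (hx : x ≠ v),
            (G.induce {u | u ≠ v}).Reachable ⟨w, hwv⟩ ⟨x, hx⟩ := by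
          intro x hx
          have hxr : x ∈ r.support := hsupp x
          set t := r.takeUntil x hxr with htdef
          have hts : ∀ z ∈ t.support, z ∈ {u | u ≠ v} := by
            intro z hz
            simp only [Set.mem_setOf_eq]
            intro hzv
            rw [hzv] at hz
            -- v is in the support of takeUntil; but v is also in dropUntil's tail
            have hnd : (t.support ++ (r.dropUntil x hxr).support.tail).Nodup := by
              rw [← Walk.support_append, Walk.take_spec]
              exact hrpath.support_nodup
            have hvd : v ∈ (r.dropUntil x hxr).support.tail := by
              have hvend : v ∈ (r.dropUntil x hxr).support := Walk.end_mem_support _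
              rw [Walk.support_eq_cons] at hvend
              rcases List.mem_cons.mp hvend with hh | hh
              · exact absurd hh.symm hx
              · exact hh
            exact (List.disjoint_of_nodup_append hnd) hz hvd
          have := aux_reach_induce G {u | u ≠ v} t hts
          exact this
        refine { preconnected := ?_, nonempty := ⟨⟨w, hwv⟩⟩ }
        rintro ⟨x, hx⟩ ⟨y, hy⟩
        exact (hreach x hx).symm.trans (hreach y hy)

end Aux

/-- Every finite 2-connected outerplanar graph has a Hamilton cycle,
and every finite outerplanar graph with a Hamilton cycle is 2-connected. -/
theorem stmt_6 {V : Type u} [Fintype V] [DecidableEq V] (G : SimpleGraph V) (ho : IsOuterplanar G) :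
    (TwoConnected G → ∃ (a : V) (p : G.Walk a a), p.IsHamiltonianCycle) ∧
      ((∃ (a : V) (p : G.Walk a a), p.IsHamiltonianCycle) → TwoConnected G) := by
  constructor
  · rintro ⟨hcard, hconn⟩
    obtain ⟨f, hf, hfc⟩ := ho
    letI : LinearOrder V := LinearOrder.lift' f hf
    have hlt : ∀ a b : V, a < b ↔ f a < f b := fun a b => by
      constructor
      · intro h
        exact lt_of_le_of_ne (le_of_lt h : f a ≤ f b) (fun he => (ne_of_lt h) (hf he))
      · intro h
        exact lt_of_le_of_ne (le_of_lt h : a ≤ b) (fun he => (Nat.ne_of_lt h) (congrArg f he))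
    have hnc : ∀ a b c d : V, G.Adj a b → G.Adj c d → ¬(a < c ∧ c < b ∧ b < d) := by
      intro a b c d h1 h2 ⟨e1, e2, e3⟩
      exact hfc a b c d h1 h2 ⟨(hlt a c).mp e1, (hlt c b).mp e2, (hlt b d).mp e3⟩
    have hcard' : 3 ≤ Fintype.card V := by rwa [Nat.card_eq_fintype_card] at hcard
    have hpre : G.Preconnected := aux_preconnected G hcard' hconn
    set n := Fintype.card V with hndef
    have hn0 : 0 < n := by omega
    let e : Fin n ≃o V := monoEquivOfFin V rfl
    have hconsec : ∀ i j : Fin n, (i : ℕ) + 1 = (j : ℕ) → G.Adj (e i) (e j) := by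
      intro i j hij
      refine aux_adj_consec G hnc hpre hconn ?_ ?_
      · rw [e.lt_iff_lt]
        exact Fin.lt_def.mpr (by omega)
      · intro z ⟨h1, h2⟩
        rw [show z = e (e.symm z) from (e.apply_symm_apply z).symm, e.lt_iff_lt] at h1 h2
        rw [Fin.lt_def] at h1 h2
        omega
    have hwrap : G.Adj (e ⟨0, hn0⟩) (e ⟨n - 1, by omega⟩) := by
      refine aux_adj_min_max G hnc hpre hconn ?_ ?_ ?_
      · intro x
        rw [show x = e (e.symm x) from (e.apply_symm_apply x).symm, e.le_iff_le]
        refine Fin.le_def.mpr ?_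
        show 0 ≤ ((e.symm x : Fin n) : ℕ)
        exact Nat.zero_le _
      · intro x
        rw [show x = e (e.symm x) from (e.apply_symm_apply x).symm, e.le_iff_le]
        refine Fin.le_def.mpr ?_
        show ((e.symm x : Fin n) : ℕ) ≤ n - 1
        have := (e.symm x).isLt
        omega
      · intro hcontra
        have := e.injective hcontra
        rw [Fin.mk.injEq] at this
        omega
    refine aux_build_cycle G n hcard' (fun i => e ⟨i % n, Nat.mod_lt _ hn0⟩) ?_ ?_ ?_ ?_
    · intro k
      have hr : k % n < n := Nat.mod_lt _ hn0
      show G.Adj (e ⟨(k + 1) % n, Nat.mod_lt _ hn0⟩) (e ⟨k % n, Nat.mod_lt _ hn0⟩)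
      have h1 : (k + 1) % n = (k % n + 1) % n := by
        conv_lhs => rw [Nat.add_mod, Nat.mod_eq_of_lt (show 1 < n by omega)]
      by_cases hc : k % n + 1 = n
      · have h2 : (k + 1) % n = 0 := by rw [h1, hc, Nat.mod_self]
        have e1 : (⟨(k + 1) % n, Nat.mod_lt _ hn0⟩ : Fin n) = ⟨0, hn0⟩ := Fin.ext h2
        have e2 : (⟨k % n, Nat.mod_lt _ hn0⟩ : Fin n) = ⟨n - 1, by omega⟩ := Fin.ext (show k % n = n - 1 by omega)
        rw [e1, e2]
        exact hwrap
      · have h2 : (k + 1) % n = k % n + 1 := by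
          rw [h1, Nat.mod_eq_of_lt (by omega)]
        exact (hconsec ⟨k % n, hr⟩ ⟨(k + 1) % n, Nat.mod_lt _ hn0⟩ (show k % n + 1 = (k + 1) % n by omega)).symm
    · exact congrArg e (Fin.ext (by simp))
    · intro i hi j hj hij
      have := e.injective hij
      rw [Fin.mk.injEq] at this
      rwa [Nat.mod_eq_of_lt hi, Nat.mod_eq_of_lt hj] at this
    · intro v
      refine ⟨(e.symm v : Fin n).val, (e.symm v).isLt, ?_⟩
      show e ⟨(e.symm v : Fin n).val % n, Nat.mod_lt _ hn0⟩ = v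
      have : (⟨(e.symm v : Fin n).val % n, Nat.mod_lt _ hn0⟩ : Fin n) = e.symm v :=
        Fin.ext (Nat.mod_eq_of_lt (e.symm v).isLt)
      rw [this, e.apply_symm_apply]
  · rintro ⟨a, p, hp⟩
    exact aux_ham_two G p hp
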